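/- If κ is an uncountable regular cardinal with κ = cf(μ) < μ, and θ^κ < μ for every cardinal θ < μ, then U_{Jbdκ}(μ) = μ^κ. -/

import Mathlib

/-- `U_{J^bd_κ}(μ)`: the least cardinality of a family `P` of subsets of `μ` of cardinality
`κ` such that every `b ∈ [μ]^κ` has intersection of full cardinality `κ` with some member
of `P`. -/
noncomputable def UJbd (κ μ : Cardinal.{0}) : Cardinal.{0} :=
  sInf {c : Cardinal.{0} | ∃ P : Set (Set μ.ord.ToType),
    Cardinal.mk P = c ∧ (∀ A ∈ P, Cardinal.mk A = κ) ∧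
    ∀ b : Set μ.ord.ToType, Cardinal.mk b = κ →
      ∃ a ∈ P, Cardinal.mk ↥(a ∩ b) = κ}

open Cardinal Set in
/-- If `D` has size less than `κ = cf μ` and `θ ^ κ < μ` for all `θ < μ`, then there are at
most `μ` functions from `D` to (the underlying type of) `μ`. -/
private lemma UJbd.pow_aux {κ μ : Cardinal.{0}} (hunc : Cardinal.aleph0 < κ)
    (hcof : μ.ord.cof = κ) (hlt : κ < μ)
    (hpow : ∀ θ : Cardinal.{0}, θ < μ → θ ^ κ < μ)
    (D : Type) (hD : #D < κ) : #(D → μ.ord.ToType) ≤ μ := by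
  classical
  haveI hwo : IsWellOrder μ.ord.ToType (· < ·) := isWellOrder_lt
  have hμinf : ℵ₀ ≤ μ := (hunc.trans hlt).le
  have h2μ : (2 : Cardinal) < μ :=
    lt_trans (lt_trans (by simpa using Cardinal.nat_lt_aleph0 2) hunc) hlt
  have hbdd : ∀ f : D → μ.ord.ToType, ∃ a, ∀ x, f x < a := by
    intro f
    have h1 : #(Set.range f) < Order.cof μ.ord.ToType := by
      rw [Ordinal.cof_toType, hcof]
      exact Cardinal.mk_range_le.trans_lt hD
    by_contra hcon
    push_neg at hcon
    refine absurd (Order.cof_le (s := Set.range f) ?_) (not_le.mpr h1)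
    intro a
    obtain ⟨x, hx⟩ := hcon a
    exact ⟨f x, Set.mem_range_self x, hx⟩
  have hΦ : Function.Injective
      (fun f : D → μ.ord.ToType =>
        (⟨(hbdd f).choose, fun x => ⟨f x, (hbdd f).choose_spec x⟩⟩ :
          Σ a : μ.ord.ToType, (D → Set.Iio a))) := by
    intro f g h
    funext x
    exact congrArg (fun p : Σ a : μ.ord.ToType, (D → Set.Iio a) => (p.2 x).1) h
  have hle1 : #(D → μ.ord.ToType) ≤ #(Σ a : μ.ord.ToType, (D → Set.Iio a)) :=
    Cardinal.mk_le_of_injective hΦ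
  rw [Cardinal.mk_sigma] at hle1
  refine hle1.trans ?_
  have hterm : ∀ a : μ.ord.ToType, #(D → (Set.Iio a : Set μ.ord.ToType)) ≤ μ := by
    intro a
    rw [← Cardinal.power_def]
    have hθ : #(Set.Iio a) < μ := Cardinal.mk_Iio_ord_toType a
    have hne : (max #(Set.Iio a) 2 : Cardinal) ≠ 0 :=
      (lt_of_lt_of_le (by norm_num) (le_max_right _ _)).ne'
    have h1 : #(Set.Iio a) ^ (#D) ≤ (max #(Set.Iio a) 2) ^ κ := by
      calc #(Set.Iio a) ^ (#D) ≤ (max #(Set.Iio a) 2) ^ (#D) :=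
            Cardinal.power_le_power_right (le_max_left _ _)
        _ ≤ (max #(Set.Iio a) 2) ^ κ := Cardinal.power_le_power_left hne hD.le
    exact h1.trans (hpow _ (max_lt hθ h2μ)).le
  calc Cardinal.sum (fun a : μ.ord.ToType => #(D → (Set.Iio a : Set μ.ord.ToType)))
      ≤ Cardinal.sum (fun _ : μ.ord.ToType => μ) := Cardinal.sum_le_sum _ _ hterm
    _ = #μ.ord.ToType * μ := Cardinal.sum_const' _ _
    _ = μ * μ := by rw [Cardinal.mk_ord_toType]
    _ = μ := Cardinal.mul_eq_self hμinf

/-- If `κ` is an uncountable regular cardinal with `κ = cf μ < μ`, and `θ^κ < μ` for every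
cardinal `θ < μ`, then `U_{J^bd_κ}(μ) = μ^κ`. -/
theorem UJbd_eq_power (κ μ : Cardinal.{0})
    (hreg : κ.IsRegular) (hunc : Cardinal.aleph0 < κ)
    (hcof : μ.ord.cof = κ) (hlt : κ < μ)
    (hpow : ∀ θ : Cardinal.{0}, θ < μ → θ ^ κ < μ) :
    UJbd κ μ = μ ^ κ := by
  classical
  open Cardinal Set in
  have hκinf : ℵ₀ ≤ κ := hunc.le
  have hμ0 : ℵ₀ < μ := hunc.trans hlt
  have hμinf : ℵ₀ ≤ μ := hμ0.le
  have h2μ : (2 : Cardinal) < μ :=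
    lt_trans (lt_trans (by simpa using Cardinal.nat_lt_aleph0 2) hunc) hlt
  have h2κμ : (2 : Cardinal) ^ κ < μ := hpow 2 h2μ
  have hκ1 : (1 : Cardinal) ≤ κ := le_trans Cardinal.one_le_aleph0 hκinf
  have hμμκ : μ ≤ μ ^ κ := Cardinal.self_le_power μ hκ1
  -- the coding embedding `e`
  have hTle : #(Σ i : κ.ord.ToType, (↥(Set.Iic i) → μ.ord.ToType)) ≤ μ := by
    rw [Cardinal.mk_sigma]
    have hterm : ∀ i : κ.ord.ToType, #(↥(Set.Iic i) → μ.ord.ToType) ≤ μ := by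
      intro i
      refine UJbd.pow_aux hunc hcof hlt hpow _ ?_
      have h1 : (Set.Iic i : Set κ.ord.ToType) = insert i (Set.Iio i) := Set.Iio_insert.symm
      rw [h1]
      refine lt_of_le_of_lt Cardinal.mk_insert_le ?_
      exact Cardinal.add_lt_of_lt hκinf (Cardinal.mk_Iio_ord_toType i)
        (lt_trans Cardinal.one_lt_aleph0 hunc)
    calc Cardinal.sum (fun i : κ.ord.ToType => #(↥(Set.Iic i) → μ.ord.ToType))
        ≤ Cardinal.sum (fun _ : κ.ord.ToType => μ) := Cardinal.sum_le_sum _ _ hterm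
      _ = #κ.ord.ToType * μ := Cardinal.sum_const' _ _
      _ = κ * μ := by rw [Cardinal.mk_ord_toType]
      _ ≤ μ * μ := mul_le_mul_left hlt.le μ
      _ = μ := Cardinal.mul_eq_self hμinf
  obtain ⟨e⟩ : Nonempty ((Σ i : κ.ord.ToType, (↥(Set.Iic i) → μ.ord.ToType)) ↪ μ.ord.ToType) := by
    rw [← Cardinal.le_def]
    exact hTle.trans_eq (Cardinal.mk_ord_toType μ).symm
  -- the coding function and coded sets
  set code : (κ.ord.ToType → μ.ord.ToType) → κ.ord.ToType → μ.ord.ToType :=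
    fun f i => e ⟨i, fun j => f j.1⟩ with hcode
  have hcodeinj : ∀ f, Function.Injective (code f) := by
    intro f i j h
    exact congrArg Sigma.fst (e.injective h)
  set bset : (κ.ord.ToType → μ.ord.ToType) → Set μ.ord.ToType :=
    fun f => Set.range (code f) with hbset
  have hbκ : ∀ f, #(bset f) = κ := by
    intro f
    exact (Cardinal.mk_range_eq _ (hcodeinj f)).trans (Cardinal.mk_ord_toType κ)
  -- rigidity : any κ-sized subset of a coded set determines the coded function
  have hrigid : ∀ f₁ f₂ : κ.ord.ToType → μ.ord.ToType, ∀ q : Set μ.ord.ToType,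
      q ⊆ bset f₁ → q ⊆ bset f₂ → #q = κ → f₁ = f₂ := by
    intro f₁ f₂ q h1 h2 hq
    funext i
    have hex : ∃ j : κ.ord.ToType, i ≤ j ∧ code f₁ j ∈ q := by
      by_contra hcon
      push_neg at hcon
      have hsub : q ⊆ (code f₁) '' (Set.Iio i) := by
        intro y hy
        obtain ⟨j, hj⟩ := h1 hy
        refine ⟨j, ?_, hj⟩
        by_contra hj2
        exact hcon j (not_lt.mp hj2) (hj ▸ hy)
      have hle : κ ≤ #(Set.Iio i : Set κ.ord.ToType) := by
        calc κ = #q := hq.symm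
          _ ≤ #((code f₁) '' (Set.Iio i)) := Cardinal.mk_le_mk_of_subset hsub
          _ ≤ #(Set.Iio i : Set κ.ord.ToType) := Cardinal.mk_image_le
      exact absurd hle (not_le.mpr (Cardinal.mk_Iio_ord_toType i))
    obtain ⟨j, hij, hjq⟩ := hex
    obtain ⟨j', hj'⟩ := h2 hjq
    have hsig := e.injective hj'
    obtain ⟨hfst, hsnd⟩ := Sigma.mk.inj_iff.mp hsig
    subst hfst
    have hfun := eq_of_heq hsnd
    exact (congrFun hfun ⟨i, hij⟩).symm
  -- the family of all subsets of size κ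
  set Pall : Set (Set μ.ord.ToType) := {a : Set μ.ord.ToType | #a = κ} with hPall
  have hKM : #(κ.ord.ToType → μ.ord.ToType) = μ ^ κ := by
    rw [← Cardinal.power_def, Cardinal.mk_ord_toType, Cardinal.mk_ord_toType]
  have hchoice : ∀ a : ↥Pall, ∃ g : κ.ord.ToType → μ.ord.ToType,
      Set.range g = a.1 := by
    intro a
    have h1 : #κ.ord.ToType = #(a.1) := by
      rw [Cardinal.mk_ord_toType]; exact a.2.symm
    obtain ⟨g⟩ := Cardinal.eq.mp h1
    refine ⟨Subtype.val ∘ g, ?_⟩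
    rw [Set.range_comp, Equiv.range_eq_univ, Set.image_univ, Subtype.range_val]
  choose G hGr using hchoice
  have hPall_le : #↥Pall ≤ μ ^ κ := by
    have hinj : Function.Injective G := by
      intro a₁ a₂ h
      apply Subtype.ext
      rw [← hGr a₁, ← hGr a₂, h]
    have := Cardinal.mk_le_of_injective hinj
    rwa [hKM] at this
  have hPall_ge : μ ^ κ ≤ #↥Pall := by
    have hinj : Function.Injective (fun f => (⟨bset f, hbκ f⟩ : ↥Pall)) := by
      intro f₁ f₂ h
      have hb : bset f₁ = bset f₂ := congrArg Subtype.val h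
      exact hrigid f₁ f₂ (bset f₁) subset_rfl (hb ▸ subset_rfl) (hbκ f₁)
    have := Cardinal.mk_le_of_injective hinj
    rwa [hKM] at this
  -- μ ^ κ is attained
  have hmemS : μ ^ κ ∈ {c : Cardinal.{0} | ∃ P : Set (Set μ.ord.ToType),
      Cardinal.mk P = c ∧ (∀ A ∈ P, Cardinal.mk A = κ) ∧
      ∀ b : Set μ.ord.ToType, Cardinal.mk b = κ →
        ∃ a ∈ P, Cardinal.mk ↥(a ∩ b) = κ} := by
    refine ⟨Pall, le_antisymm hPall_le hPall_ge, fun A hA => hA, fun b hb => ⟨b, hb, ?_⟩⟩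
    rw [Set.inter_self]
    exact hb
  -- every covering family has at least μ ^ κ members
  have hlb : ∀ c ∈ {c : Cardinal.{0} | ∃ P : Set (Set μ.ord.ToType),
      Cardinal.mk P = c ∧ (∀ A ∈ P, Cardinal.mk A = κ) ∧
      ∀ b : Set μ.ord.ToType, Cardinal.mk b = κ →
        ∃ a ∈ P, Cardinal.mk ↥(a ∩ b) = κ}, μ ^ κ ≤ c := by
    rintro c ⟨P, hPc, hPκ, hPcov⟩
    by_contra hcon
    push_neg at hcon
    have hch : ∀ f : κ.ord.ToType → μ.ord.ToType,
        ∃ a, a ∈ P ∧ #((a ∩ bset f : Set μ.ord.ToType)) = κ := by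
      intro f
      obtain ⟨a, ha, h2⟩ := hPcov (bset f) (hbκ f)
      exact ⟨a, ha, h2⟩
    choose A hAP hAint using hch
    have hΦinj : Function.Injective
        (fun f : κ.ord.ToType → μ.ord.ToType =>
          (⟨⟨A f, hAP f⟩, Subtype.val ⁻¹' bset f⟩ : Σ a : ↥P, Set ↥(a.1))) := by
      intro f₁ f₂ h
      have h2 : A f₁ ∩ bset f₁ = A f₂ ∩ bset f₂ := by
        have h3 := congrArg
          (fun p : Σ a : ↥P, Set ↥(a.1) => (Subtype.val '' p.2 : Set μ.ord.ToType)) h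
        simpa [Subtype.image_preimage_val] using h3
      refine hrigid f₁ f₂ (A f₁ ∩ bset f₁) Set.inter_subset_right ?_ (hAint f₁)
      rw [h2]
      exact Set.inter_subset_right
    have hcount := Cardinal.mk_le_of_injective hΦinj
    have hs : #(Σ a : ↥P, Set ↥(a.1)) = #↥P * 2 ^ κ := by
      rw [Cardinal.mk_sigma, ← Cardinal.sum_const']
      congr 1
      funext a
      rw [Cardinal.mk_set, hPκ a.1 a.2]
    rw [hKM, hs, hPc] at hcount
    have hfin : c * 2 ^ κ < μ ^ κ := by
      refine lt_of_le_of_lt (Cardinal.mul_le_max c (2 ^ κ)) ?_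
      exact max_lt (max_lt hcon (lt_of_lt_of_le h2κμ hμμκ)) (lt_of_lt_of_le hμ0 hμμκ)
    exact absurd hcount (not_le.mpr hfin)
  unfold UJbd
  exact le_antisymm (csInf_le' hmemS) (le_csInf ⟨_, hmemS⟩ hlb)
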